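/- Let Θ be a nonempty set and T a positive integer. For each round t ∈ {1, …, T}, let μ_{t−1}, σ_{t−1} : Θ → ℝ with σ_{t−1}(θ) ≥ 0 for all θ, let β_t ≥ 0, and suppose the confidence bound |f(θ) − μ_{t−1}(θ)| ≤ √β_t · σ_{t−1}(θ) holds for all θ ∈ Θ, where f : Θ → ℝ is fixed. Suppose θ_t ∈ Θ maximizes θ ↦ μ_{t−1}(θ) + √β_t · σ_{t−1}(θ) over Θ. Then for any θ* ∈ Θ the cumulative regret satisfies Σ_{t=1}^{T} (f(θ*) − f(θ_t)) ≤ 2 · √( (Σ_{t=1}^{T} β_t) · (Σ_{t=1}^{T} σ_{t−1}(θ_t)²) ). -/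
import Mathlib


open Finset in
/-- Deterministic core of the GP-UCB cumulative regret bound.
With per-round confidence bounds `|f θ - μ t θ| ≤ √(β t) * σ t θ` and `θsel t`
maximizing the upper confidence bound at round `t`, the cumulative regret with
respect to any `θstar` is bounded by
`2 * √((∑ β t) * (∑ (σ t (θsel t))²))` (Cauchy–Schwarz). -/
theorem ucb_cumulative_regret {Θ : Type*} [Nonempty Θ]
    (T : ℕ) (hT : 0 < T)
    (f : Θ → ℝ) (μ σ : Fin T → Θ → ℝ) (β : Fin T → ℝ)
    (θsel : Fin T → Θ) (θstar : Θ)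
    (hσ : ∀ t θ, 0 ≤ σ t θ) (hβ : ∀ t, 0 ≤ β t)
    (hconf : ∀ t θ, |f θ - μ t θ| ≤ Real.sqrt (β t) * σ t θ)
    (hmax : ∀ t θ, μ t θ + Real.sqrt (β t) * σ t θ
        ≤ μ t (θsel t) + Real.sqrt (β t) * σ t (θsel t)) :
    ∑ t : Fin T, (f θstar - f (θsel t))
      ≤ 2 * Real.sqrt ((∑ t : Fin T, β t) * (∑ t : Fin T, (σ t (θsel t)) ^ 2)) := by
  have hr : ∀ t : Fin T, f θstar - f (θsel t)
      ≤ 2 * (Real.sqrt (β t) * σ t (θsel t)) := by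
    intro t
    have h1 := abs_le.1 (hconf t θstar)
    have h2 := abs_le.1 (hconf t (θsel t))
    have h3 := hmax t θstar
    linarith [h1.1, h1.2, h2.1, h2.2]
  calc ∑ t : Fin T, (f θstar - f (θsel t))
      ≤ ∑ t : Fin T, 2 * (Real.sqrt (β t) * σ t (θsel t)) :=
        Finset.sum_le_sum fun t _ => hr t
    _ = 2 * ∑ t : Fin T, Real.sqrt (β t) * σ t (θsel t) := by
        rw [Finset.mul_sum]
    _ ≤ 2 * Real.sqrt ((∑ t : Fin T, β t) * (∑ t : Fin T, (σ t (θsel t)) ^ 2)) := by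
        gcongr
        have hcs := Finset.sum_mul_sq_le_sq_mul_sq
          (Finset.univ : Finset (Fin T)) (fun t => Real.sqrt (β t))
          (fun t => σ t (θsel t))
        have heq : ∑ t : Fin T, Real.sqrt (β t) ^ 2 = ∑ t : Fin T, β t :=
          Finset.sum_congr rfl fun t _ => Real.sq_sqrt (hβ t)
        rw [heq] at hcs
        have h0 : 0 ≤ ∑ t : Fin T, Real.sqrt (β t) * σ t (θsel t) :=
          Finset.sum_nonneg fun t _ => mul_nonneg (Real.sqrt_nonneg _) (hσ t _)
        calc ∑ t : Fin T, Real.sqrt (β t) * σ t (θsel t)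
            = Real.sqrt ((∑ t : Fin T, Real.sqrt (β t) * σ t (θsel t)) ^ 2) :=
              (Real.sqrt_sq h0).symm
          _ ≤ Real.sqrt ((∑ t : Fin T, β t) * (∑ t : Fin T, (σ t (θsel t)) ^ 2)) :=
              Real.sqrt_le_sqrt hcs
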